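/- Let p > 5 be a prime. If p \equiv 1 (mod 6), then \sum_{k=0}^{\lfloor p/3 \rfloor} k (3k)!/(54^k k!^3) \equiv 0 \pmod{p}. If p \equiv 5 (mod 6), then \sum_{k=0}^{\lfloor p/3 \rfloor} k (3k)!/(54^k k!^3) \equiv (1/3)(-1)^{(p+1)/6} 2^{-(p+1)/3} \binom{(p+1)/3}{(p+1)/6} \pmod{p}. -/

import Mathlib

open Finset

/-! ### Auxiliary integer identities -/

lemma sum21 (N : ℕ) : ∑ i ∈ range (N+1), (-1:ℤ)^i * 2^(N-i) * (N.choose i) = 1 := by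
  have h := add_pow (-1 : ℤ) 2 N
  rw [show ((-1:ℤ)+2) = 1 by ring] at h
  simpa using h.symm

lemma sum21' (N : ℕ) : ∑ i ∈ range (N+1), (i:ℤ) * ((-1)^i * 2^(N-i) * (N.choose i)) = -N := by
  induction N with
  | zero => simp
  | succ M _ =>
    rw [Finset.sum_range_succ']
    have : ∀ i ∈ range (M+1), ((i+1:ℕ):ℤ) * ((-1)^(i+1) * 2^(M+1-(i+1)) * ((M+1).choose (i+1)))
        = -((M:ℤ)+1) * ((-1)^i * 2^(M-i) * (M.choose i)) := by
      intro i hi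
      have h : (M+1) * M.choose i = (M+1).choose (i+1) * (i+1) := Nat.add_one_mul_choose_eq M i
      have h' : ((i:ℤ)+1) * ((M+1).choose (i+1)) = ((M:ℤ)+1) * (M.choose i) := by
        have := congrArg (fun n : ℕ => (n : ℤ)) h
        push_cast at this; linarith [this]
      rw [Nat.add_sub_add_right]
      push_cast
      calc ((i:ℤ)+1) * ((-1)^(i+1) * 2^(M-i) * ((M+1).choose (i+1)))
          = (((i:ℤ)+1) * ((M+1).choose (i+1))) * ((-1)^(i+1) * 2^(M-i)) := by ring
        _ = (((M:ℤ)+1) * (M.choose i)) * ((-1)^(i+1) * 2^(M-i)) := by rw [h']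
        _ = -((M:ℤ)+1) * ((-1)^i * 2^(M-i) * (M.choose i)) := by rw [pow_succ]; ring
    rw [Finset.sum_congr rfl this, ← Finset.mul_sum, sum21 M]
    push_cast; ring

lemma innerSumId (m j : ℕ) (hj : j ≤ m) :
    ∑ k ∈ range (m+1), (k:ℤ) * ((-1)^k * 2^(m-k) * (m.choose k * k.choose j))
      = (-1)^j * (m.choose j) * (2*j - m) := by
  have hsplit : m + 1 = j + (m + 1 - j) := by omega
  rw [hsplit, Finset.sum_range_add]
  have h0 : ∀ k ∈ range j, (k:ℤ) * ((-1)^k * 2^(m-k) * (m.choose k * k.choose j)) = 0 := by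
    intro k hk
    rw [Nat.choose_eq_zero_of_lt (mem_range.mp hk)]; push_cast; ring
  rw [Finset.sum_congr rfl h0, Finset.sum_const_zero, zero_add]
  have hterm : ∀ i ∈ range (m+1-j), ((j+i:ℕ):ℤ) * ((-1)^(j+i) * 2^(m-(j+i)) * ((m.choose (j+i)) * ((j+i).choose j)))
      = (-1)^j * (m.choose j) * (((j:ℤ)+i) * ((-1:ℤ)^i * 2^((m-j)-i) * ((m-j).choose i))) := by
    intro i hi
    have hi' : i ≤ m - j := by have := mem_range.mp hi; omega
    have hc : m.choose (j+i) * (j+i).choose j = m.choose j * (m-j).choose i := by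
      have := Nat.choose_mul (n := m) (k := j+i) (s := j) (by omega)
      simpa using this
    have hc' : ((m.choose (j+i) : ℤ)) * ((j+i).choose j) = (m.choose j : ℤ) * ((m-j).choose i) := by
      exact_mod_cast congrArg (fun n : ℕ => (n:ℤ)) hc
    have he : m - (j+i) = (m-j) - i := by omega
    rw [he, pow_add]
    push_cast
    rw [mul_comm ((m.choose (j+i):ℤ)) _] at hc'
    calc ((j:ℤ)+i) * ((-1)^j * (-1)^i * 2^((m-j)-i) * ((m.choose (j+i)) * ((j+i).choose j)))
        = ((m.choose (j+i):ℤ) * ((j+i).choose j)) * (((j:ℤ)+i) * ((-1)^j * (-1)^i * 2^((m-j)-i))) := by ring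
      _ = ((m.choose j:ℤ) * ((m-j).choose i)) * (((j:ℤ)+i) * ((-1)^j * (-1)^i * 2^((m-j)-i))) := by rw [← hc']; ring
      _ = (-1)^j * (m.choose j) * (((j:ℤ)+i) * ((-1:ℤ)^i * 2^((m-j)-i) * ((m-j).choose i))) := by ring
  rw [Finset.sum_congr rfl hterm, ← Finset.mul_sum]
  have hN : m + 1 - j = (m-j) + 1 := by omega
  rw [hN]
  have hadd : ∑ i ∈ range ((m-j)+1), ((j:ℤ)+i) * ((-1:ℤ)^i * 2^((m-j)-i) * ((m-j).choose i))
      = (j:ℤ) * (∑ i ∈ range ((m-j)+1), (-1:ℤ)^i * 2^((m-j)-i) * ((m-j).choose i))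
        + ∑ i ∈ range ((m-j)+1), (i:ℤ) * ((-1:ℤ)^i * 2^((m-j)-i) * ((m-j).choose i)) := by
    rw [Finset.mul_sum, ← Finset.sum_add_distrib]
    exact Finset.sum_congr rfl (fun i _ => by ring)
  rw [hadd, sum21, sum21']
  have : ((m:ℤ) - j) = ((m - j : ℕ) : ℤ) := by omega
  rw [← this]; ring

lemma vandExt (m k : ℕ) (hk : k ≤ m) :
    (m+k).choose k = ∑ j ∈ range (m+1), m.choose j * k.choose j := by
  rw [Nat.add_choose_eq, Finset.Nat.sum_antidiagonal_eq_sum_range_succ_mk]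
  have h1 : ∀ i ∈ range (k+1), m.choose i * k.choose (k - i) = m.choose i * k.choose i := by
    intro i hi
    rw [Nat.choose_symm (show i ≤ k by have := mem_range.mp hi; omega)]
  rw [Finset.sum_congr rfl h1]
  apply Finset.sum_subset
  · intro x hx; simp at hx ⊢; omega
  · intro x hx hx2; simp at hx hx2
    rw [Nat.choose_eq_zero_of_lt (show k < x by omega), Nat.mul_zero]

lemma VtoV (m : ℕ) :
    ∑ k ∈ range (m+1), (k:ℤ) * ((-1)^k * 2^(m-k) * (m.choose k * (m+k).choose k))
      = ∑ j ∈ range (m+1), (-1:ℤ)^j * ((m.choose j):ℤ)^2 * (2*j - m) := by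
  have hexp : ∀ k ∈ range (m+1), (k:ℤ) * ((-1)^k * 2^(m-k) * (m.choose k * (m+k).choose k))
      = ∑ j ∈ range (m+1), (k:ℤ) * ((-1)^k * 2^(m-k) * (m.choose k * (m.choose j * k.choose j))) := by
    intro k hk
    rw [vandExt m k (by exact Nat.lt_succ_iff.mp (mem_range.mp hk))]
    push_cast [Finset.mul_sum]
    exact Finset.sum_congr rfl (fun j _ => by ring)
  rw [Finset.sum_congr rfl hexp, Finset.sum_comm]
  refine Finset.sum_congr rfl (fun j hj => ?_)
  have : ∑ k ∈ range (m+1), (k:ℤ) * ((-1)^k * 2^(m-k) * (m.choose k * (m.choose j * k.choose j)))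
      = (m.choose j : ℤ) * ∑ k ∈ range (m+1), (k:ℤ) * ((-1)^k * 2^(m-k) * (m.choose k * k.choose j)) := by
    rw [Finset.mul_sum]; exact Finset.sum_congr rfl (fun k _ => by ring)
  rw [this, innerSumId m j (Nat.lt_succ_iff.mp (mem_range.mp hj))]
  ring

lemma neg_one_pow_sub (n k : ℕ) (hk : k ≤ n) : (-1:ℤ)^n * (-1)^(n-k) = (-1)^k := by
  have : (-1:ℤ)^n * (-1)^(n-k) * (-1)^k = (-1)^k * (-1)^k := by
    rw [← pow_add, ← pow_add, show n + (n-k) + k = 2*n by omega, pow_mul, ← pow_add,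
      show k + k = 2*k by omega, pow_mul]
    norm_num
  have hne : ((-1:ℤ)^k) ≠ 0 := pow_ne_zero k (by norm_num)
  exact mul_right_cancel₀ hne this

lemma neg_one_pow_sub' (n k : ℕ) (hk : k ≤ n) : (-1:ℤ)^(n-k) = (-1)^n * (-1)^k := by
  have h := neg_one_pow_sub n k hk
  have h2 : (-1:ℤ)^n * ((-1)^n * (-1)^(n-k)) = (-1)^n * (-1)^k := by rw [h]
  rwa [← mul_assoc, ← pow_add, show n + n = 2*n by omega, pow_mul, neg_one_sq, one_pow, one_mul] at h2

open Polynomial in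
lemma coeff_one_sub_X_pow (n k : ℕ) :
    ((1 - X : Polynomial ℤ)^n).coeff k = (-1)^k * n.choose k := by
  have h : (1 - X : Polynomial ℤ) = C (-1) * (X + C (-1)) := by
    simp [mul_add]; ring
  rw [h, mul_pow, ← C_pow, Polynomial.coeff_C_mul, Polynomial.coeff_X_add_C_pow]
  by_cases hk : k ≤ n
  · rw [← mul_assoc, neg_one_pow_sub n k hk]
  · rw [Nat.choose_eq_zero_of_lt (by omega)]
    push_cast; ring

open Polynomial in
lemma altSq (t : ℕ) :
    ∑ i ∈ range (2*t+1), (-1:ℤ)^i * ((2*t).choose i)^2 = (-1)^t * (2*t).choose t := by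
  set n := 2*t with hn
  have hneg : (-1:ℤ)^n = 1 := by rw [hn, pow_mul]; norm_num
  have h1 : (((1+X):Polynomial ℤ)^n * ((1-X):Polynomial ℤ)^n).coeff n
      = ∑ i ∈ range (n+1), (-1:ℤ)^i * ((n).choose i)^2 := by
    rw [Polynomial.coeff_mul, Finset.Nat.sum_antidiagonal_eq_sum_range_succ_mk]
    refine Finset.sum_congr rfl (fun i hi => ?_)
    rw [Polynomial.coeff_one_add_X_pow, coeff_one_sub_X_pow]
    have hi' : i ≤ n := by have := mem_range.mp hi; omega
    have h2 : (-1:ℤ)^(n-i) = (-1)^i := by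
      have := neg_one_pow_sub n i hi'; rw [hneg, one_mul] at this; exact this
    rw [Nat.choose_symm hi', h2]; ring
  have h3 : (((1+X):Polynomial ℤ)^n * ((1-X):Polynomial ℤ)^n).coeff n
      = (-1)^t * (n.choose t : ℤ) := by
    have hprod : ((1+X):Polynomial ℤ)^n * ((1-X):Polynomial ℤ)^n = ((-X^2) + 1)^n := by
      rw [← mul_pow]; ring_nf
    rw [hprod, add_pow, Polynomial.finset_sum_coeff]
    have hterm : ∀ i ∈ range (n+1),
        ((-X^2 : Polynomial ℤ)^i * 1^(n-i) * ((n.choose i : ℕ) : Polynomial ℤ)).coeff n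
        = if n = 2*i then (-1:ℤ)^i * (n.choose i) else 0 := by
      intro i hi
      have hx : (-X^2 : Polynomial ℤ)^i = C ((-1)^i) * X^(2*i) := by
        rw [show (-X^2 : Polynomial ℤ) = C (-1) * X^2 by simp, mul_pow, ← C_pow, ← pow_mul]
      rw [one_pow, mul_one, hx, show ((n.choose i : ℕ) : Polynomial ℤ) = C ((n.choose i : ℤ)) by simp,
        mul_comm, ← mul_assoc, ← C_mul, Polynomial.coeff_C_mul, Polynomial.coeff_X_pow]
      split_ifs <;> ring
    rw [Finset.sum_congr rfl hterm, Finset.sum_eq_single t]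
    · simp [hn]
    · intro b hb hbt; rw [if_neg (by omega)]
    · intro h; exact absurd (mem_range.mpr (by omega)) h
  rw [← h1, h3]

lemma Veven (m : ℕ) (hm : Even m) :
    ∑ j ∈ range (m+1), (-1:ℤ)^j * ((m.choose j):ℤ)^2 * (2*j - m) = 0 := by
  have hrefl := Finset.sum_range_reflect (fun j => (-1:ℤ)^j * ((m.choose j):ℤ)^2 * (2*j - m)) (m+1)
  have hme : (-1:ℤ)^m = 1 := hm.neg_one_pow
  have hcong : ∀ j ∈ range (m+1),
      (-1:ℤ)^(m+1-1-j) * ((m.choose (m+1-1-j)):ℤ)^2 * (2*(m+1-1-j : ℕ) - m)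
      = -((-1:ℤ)^j * ((m.choose j):ℤ)^2 * (2*j - m)) := by
    intro j hj
    have hjm : j ≤ m := by have := mem_range.mp hj; omega
    have e1 : m+1-1-j = m - j := by omega
    rw [e1, neg_one_pow_sub' m j hjm, hme, Nat.choose_symm hjm]
    have e2 : ((m - j : ℕ) : ℤ) = (m:ℤ) - j := by omega
    rw [e2]; ring
  rw [Finset.sum_congr rfl hcong, Finset.sum_neg_distrib] at hrefl
  linarith [hrefl]

lemma sigma0_odd (m : ℕ) (hm : Odd m) :
    ∑ j ∈ range (m+1), (-1:ℤ)^j * ((m.choose j):ℤ)^2 = 0 := by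
  have hrefl := Finset.sum_range_reflect (fun j => (-1:ℤ)^j * ((m.choose j):ℤ)^2) (m+1)
  have hmo : (-1:ℤ)^m = -1 := hm.neg_one_pow
  have hcong : ∀ j ∈ range (m+1),
      (-1:ℤ)^(m+1-1-j) * ((m.choose (m+1-1-j)):ℤ)^2
      = -((-1:ℤ)^j * ((m.choose j):ℤ)^2) := by
    intro j hj
    have hjm : j ≤ m := by have := mem_range.mp hj; omega
    have e1 : m+1-1-j = m - j := by omega
    rw [e1, neg_one_pow_sub' m j hjm, hmo, Nat.choose_symm hjm]; ring
  rw [Finset.sum_congr rfl hcong, Finset.sum_neg_distrib] at hrefl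
  linarith [hrefl]

lemma Fzero (t : ℕ) :
    ∑ i ∈ range (2*t), (-1:ℤ)^i * ((2*t).choose i) * ((2*t).choose (i+1)) = 0 := by
  have hrefl := Finset.sum_range_reflect
    (fun i => (-1:ℤ)^i * ((2*t).choose i) * ((2*t).choose (i+1))) (2*t)
  rcases Nat.eq_zero_or_pos t with ht | ht
  · subst ht; simp
  have hcong : ∀ i ∈ range (2*t),
      (-1:ℤ)^(2*t-1-i) * ((2*t).choose (2*t-1-i)) * ((2*t).choose (2*t-1-i+1))
      = -((-1:ℤ)^i * ((2*t).choose i) * ((2*t).choose (i+1))) := by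
    intro i hi
    have hi' : i < 2*t := mem_range.mp hi
    have e1 : (2*t).choose (2*t-1-i) = (2*t).choose (i+1) := by
      rw [show 2*t-1-i = 2*t - (i+1) by omega, Nat.choose_symm (by omega)]
    have e2 : 2*t-1-i+1 = 2*t - i := by omega
    have e3 : (2*t).choose (2*t-i) = (2*t).choose i := Nat.choose_symm (by omega)
    have e4 : (-1:ℤ)^(2*t-1-i) = -(-1:ℤ)^i := by
      rw [show 2*t-1-i = 2*t-(1+i) by omega, neg_one_pow_sub' (2*t) (1+i) (by omega), pow_mul,
        pow_add]
      norm_num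
    rw [e1, e2, e3, e4]; ring
  rw [Finset.sum_congr rfl hcong, Finset.sum_neg_distrib] at hrefl
  linarith [hrefl]

lemma Wodd (t : ℕ) :
    ∑ j ∈ range (2*t+1+1), (j:ℤ) * ((-1)^j * ((2*t+1).choose j:ℤ)^2)
      = -((2*t:ℤ)+1) * ((-1)^t * ((2*t).choose t)) := by
  set m := 2*t+1 with hm
  rw [Finset.sum_range_succ']
  simp only [Nat.cast_zero, zero_mul, add_zero]
  have hterm : ∀ i ∈ range m, ((i+1:ℕ):ℤ) * ((-1)^(i+1) * ((m.choose (i+1)):ℤ)^2)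
      = -(m:ℤ) * ((-1)^i * ((m-1).choose i) * (m.choose (i+1))) := by
    intro i hi
    have h : m * (m-1).choose i = m.choose (i+1) * (i+1) := by
      have := Nat.add_one_mul_choose_eq (m-1) i
      simpa [hm] using this
    have h' : (m:ℤ) * ((m-1).choose i) = (m.choose (i+1):ℤ) * ((i:ℤ)+1) := by exact_mod_cast h
    push_cast
    calc ((i:ℤ)+1) * ((-1)^(i+1) * ((m.choose (i+1)):ℤ)^2)
        = ((m.choose (i+1):ℤ) * ((i:ℤ)+1)) * ((-1)^(i+1) * (m.choose (i+1))) := by ring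
      _ = ((m:ℤ) * ((m-1).choose i)) * ((-1)^(i+1) * (m.choose (i+1))) := by rw [← h']
      _ = -(m:ℤ) * ((-1)^i * ((m-1).choose i) * (m.choose (i+1))) := by rw [pow_succ]; ring
  rw [Finset.sum_congr rfl hterm, ← Finset.mul_sum]
  have hpascal : ∀ i ∈ range m, (-1:ℤ)^i * ((m-1).choose i) * ((m.choose (i+1)):ℤ)
      = (-1:ℤ)^i * ((2*t).choose i:ℤ)^2 + (-1:ℤ)^i * ((2*t).choose i) * ((2*t).choose (i+1)) := by
    intro i hi
    have hp : m.choose (i+1) = (2*t).choose i + (2*t).choose (i+1) := by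
      rw [hm]; exact Nat.choose_succ_succ (2*t) i
    have hm1 : m - 1 = 2*t := by omega
    rw [hm1, hp]; push_cast; ring
  rw [Finset.sum_congr rfl hpascal, Finset.sum_add_distrib, altSq t]
  have hF : ∑ i ∈ range m, (-1:ℤ)^i * ((2*t).choose i) * ((2*t).choose (i+1)) = 0 := by
    rw [hm, Finset.sum_range_succ]
    simp only [Nat.choose_eq_zero_of_lt (Nat.lt_succ_self (2*t)), Nat.cast_zero, mul_zero, add_zero]
    exact Fzero t
  rw [hF, add_zero, hm]
  push_cast; ring

lemma Vodd (t : ℕ) :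
    ∑ j ∈ range (2*t+1+1), (-1:ℤ)^j * (((2*t+1).choose j):ℤ)^2 * (2*j - (2*t+1))
      = -2*((2*t:ℤ)+1) * ((-1)^t * ((2*t).choose t)) := by
  have hsplit : ∀ j ∈ range (2*t+1+1), (-1:ℤ)^j * (((2*t+1).choose j):ℤ)^2 * (2*j - (2*t+1))
      = 2 * ((j:ℤ) * ((-1)^j * (((2*t+1).choose j):ℤ)^2))
        - (2*t+1) * ((-1:ℤ)^j * (((2*t+1).choose j):ℤ)^2) := by
    intro j _; ring
  rw [Finset.sum_congr rfl hsplit, Finset.sum_sub_distrib, ← Finset.mul_sum, ← Finset.mul_sum,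
    Wodd t, sigma0_odd (2*t+1) ⟨t, by ring⟩]
  ring

/-! ### ZMod p computations -/

lemma fact_ne_zero' (p n : ℕ) (hp : p.Prime) (hn : n < p) : ((n.factorial : ℕ) : ZMod p) ≠ 0 := by
  rw [Ne, ZMod.natCast_eq_zero_iff]
  intro h
  exact absurd ((Nat.Prime.dvd_factorial hp).mp h) (by omega)

lemma core (p m : ℕ) (hp : p.Prime) (hmod : ((9*m^2+9*m+2 : ℕ) : ZMod p) = 0)
    (hmp : 2*m < p) : ∀ k, k ≤ m →
    (((3*k).factorial : ℕ) : ZMod p) * (((m-k).factorial : ℕ) : ZMod p)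
      = (-1)^k * 27^k * ((k.factorial : ℕ) : ZMod p) * (((m+k).factorial : ℕ) : ZMod p) := by
  haveI : Fact p.Prime := ⟨hp⟩
  intro k
  induction k with
  | zero => intro _; simp
  | succ k ih =>
    intro hk1
    have hk : k ≤ m := by omega
    have IH := ih hk
    have hmk0 : ((m - k : ℕ) : ZMod p) ≠ 0 := by
      rw [Ne, ZMod.natCast_eq_zero_iff]
      intro h
      have := Nat.le_of_dvd (by omega) h
      omega
    apply mul_right_cancel₀ hmk0
    have e1 : (3*(k+1)).factorial = (3*k+3) * ((3*k+2) * ((3*k+1) * (3*k).factorial)) := by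
      rw [show 3*(k+1) = (3*k+2)+1 by ring, Nat.factorial_succ,
        show 3*k+2 = (3*k+1)+1 by ring, Nat.factorial_succ,
        show 3*k+1 = (3*k)+1 by ring, Nat.factorial_succ]
    have e2 : (m - k).factorial = (m-k) * (m-(k+1)).factorial := by
      rw [show m - k = (m-(k+1))+1 by omega, Nat.factorial_succ]
    have e3 : (m+(k+1)).factorial = (m+k+1) * (m+k).factorial := by
      rw [show m+(k+1) = (m+k)+1 by ring, Nat.factorial_succ]
    have key : ((3*k+1 : ℕ) : ZMod p) * ((3*k+2 : ℕ)) * ((3*k+3 : ℕ))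
        = -27 * ((m-k : ℕ)) * ((k+1 : ℕ)) * ((m+k+1 : ℕ)) := by
      have hcast : ((m - k : ℕ) : ZMod p) = (m : ZMod p) - k := by
        push_cast [Nat.cast_sub hk]; ring
      have hmod' : ((9*m^2+9*m+2 : ℕ) : ZMod p) = 9*(m:ZMod p)^2+9*m+2 := by push_cast; ring
      rw [hcast]
      push_cast
      rw [hmod'] at hmod
      linear_combination (3*(k:ZMod p)+3) * hmod
    calc (((3*(k+1)).factorial : ℕ) : ZMod p) * (((m-(k+1)).factorial : ℕ) : ZMod p) * ((m-k : ℕ) : ZMod p)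
        = (((3*k+1 : ℕ):ZMod p) * ((3*k+2 : ℕ)) * ((3*k+3 : ℕ)))
          * ((((3*k).factorial : ℕ) : ZMod p) * (((m-k).factorial : ℕ) : ZMod p)) := by
          rw [e1, e2]; push_cast; ring
      _ = (-27 * ((m-k : ℕ):ZMod p) * ((k+1 : ℕ)) * ((m+k+1 : ℕ)))
          * ((-1)^k * 27^k * ((k.factorial : ℕ) : ZMod p) * (((m+k).factorial : ℕ) : ZMod p)) := by
          rw [key, IH]
      _ = (-1)^(k+1) * 27^(k+1) * (((k+1).factorial : ℕ) : ZMod p) * (((m+(k+1)).factorial : ℕ) : ZMod p) * ((m-k : ℕ) : ZMod p) := by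
          rw [e3, Nat.factorial_succ]; push_cast; ring

lemma nid3 (m k : ℕ) (hk : k ≤ m) :
    k.factorial * (m+k).factorial * (m.choose k * (m-k).factorial)^3
      = m.factorial^3 * (m.choose k * ((m+k).choose k * (m-k).factorial)) := by
  have h1 : m.choose k * k.factorial * (m-k).factorial = m.factorial :=
    Nat.choose_mul_factorial_mul_factorial hk
  have h2 : (m+k).choose k * k.factorial * m.factorial = (m+k).factorial := by
    have := Nat.choose_mul_factorial_mul_factorial (show k ≤ m + k by omega)
    simpa [Nat.add_sub_cancel] using this
  rw [← h2, ← h1]; ring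

lemma nid5 (m k : ℕ) (hk : k ≤ m) :
    54^(m-k) * 27^k * (k.factorial * (m+k).factorial * (m.choose k * (m-k).factorial)^3)
      = 27^m * 2^(m-k) * (m.factorial^3 * (m.choose k * ((m+k).choose k * (m-k).factorial))) := by
  have h54 : (54:ℕ)^(m-k) = 2^(m-k) * 27^(m-k) := by rw [← Nat.mul_pow]
  have h27 : (27:ℕ)^(m-k) * 27^k = 27^m := by rw [← pow_add]; congr 1; omega
  rw [nid3 m k hk, h54, mul_assoc (2^(m-k)) _ _, ← h27]; ring

lemma termCong (p m k : ℕ) (hp : p.Prime) (hmod : ((9*m^2+9*m+2 : ℕ) : ZMod p) = 0)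
    (hmp : 2*m < p) (hk : k ≤ m) :
    ((k * (3*k).factorial * 54^(m-k) * (m.choose k * (m-k).factorial)^3 : ℕ) : ZMod p)
      = 27^m * ((m.factorial : ℕ) : ZMod p)^3
        * ((k : ZMod p) * ((-1)^k * 2^(m-k) * (((m.choose k : ℕ) : ZMod p) * (((m+k).choose k : ℕ) : ZMod p)))) := by
  haveI : Fact p.Prime := ⟨hp⟩
  apply mul_right_cancel₀ (fact_ne_zero' p (m-k) hp (by omega))
  have hcore := core p m hp hmod hmp k hk
  have cast5 := congrArg (fun n : ℕ => (n : ZMod p)) (nid5 m k hk)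
  push_cast at cast5 ⊢
  linear_combination ((k:ZMod p) * 54^(m-k) * ((m.choose k : ZMod p))^3 * (((m-k).factorial : ZMod p))^3) * hcore + ((k:ZMod p)*(-1)^k) * cast5

/-! ### Rational plumbing -/

lemma nid4 (m k : ℕ) (hk : k ≤ m) :
    (k * (3*k).factorial * 54^(m-k) * (m.choose k * (m-k).factorial)^3) * (54^k * k.factorial^3)
      = k * (3*k).factorial * (54^m * m.factorial^3) := by
  have h1 : m.choose k * k.factorial * (m-k).factorial = m.factorial :=
    Nat.choose_mul_factorial_mul_factorial hk
  have h54 : (54:ℕ)^(m-k) * 54^k = 54^m := by rw [← pow_add]; congr 1; omega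
  rw [← h54, ← h1]; ring

lemma sumEq (m : ℕ) :
    ∑ k ∈ range (m+1), (k : ℚ) * ((3 * k).factorial : ℚ) / (54 ^ k * (k.factorial : ℚ) ^ 3)
      = ((∑ k ∈ range (m+1), k * (3*k).factorial * 54^(m-k) * (m.choose k * (m-k).factorial)^3 : ℕ) : ℚ)
        / ((54^m * m.factorial^3 : ℕ) : ℚ) := by
  have hD : ((54^m * m.factorial^3 : ℕ) : ℚ) ≠ 0 := by
    positivity
  rw [eq_div_iff hD, Finset.sum_mul]
  push_cast
  refine Finset.sum_congr rfl (fun k hk => ?_)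
  have hk' : k ≤ m := by have := mem_range.mp hk; omega
  have h4 := congrArg (fun n : ℕ => (n : ℚ)) (nid4 m k hk')
  push_cast at h4
  have hden : ((54:ℚ)^k * (k.factorial : ℚ)^3) ≠ 0 := by positivity
  rw [div_mul_eq_mul_div, div_eq_iff hden]
  linear_combination -h4

/-- `a ≡ b (mod p^k)` as rationals: `a - b` is `p^k` times a `p`-integral rational. -/
def ratCongr (p k : ℕ) (a b : ℚ) : Prop :=
  ∃ c : ℚ, a - b = (p : ℚ) ^ k * c ∧ ¬ (p ∣ c.den)

lemma ratCongr_of (p : ℕ) (a b : ℚ) (N : ℤ) (D : ℕ)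
    (hab : a - b = (N : ℚ) / (D : ℚ)) (hpN : (p:ℤ) ∣ N) (hpD : ¬ p ∣ D) :
    ratCongr p 1 a b := by
  obtain ⟨N', rfl⟩ := hpN
  refine ⟨(N' : ℚ) / (D : ℚ), ?_, ?_⟩
  · rw [hab]; push_cast; ring
  · intro hdvd
    apply hpD
    have hdd : (((N' : ℚ) / (D : ℚ)).den : ℤ) ∣ (D : ℤ) := by
      have hc : ((D:ℚ)) = (((D:ℤ)):ℚ) := by push_cast; rfl
      rw [hc, ← Rat.divInt_eq_div]
      exact Rat.den_dvd N' D
    have : (p : ℤ) ∣ (D : ℤ) := dvd_trans (Int.natCast_dvd_natCast.mpr hdvd) hdd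
    exact_mod_cast this

lemma Acast (p m : ℕ) (hp : p.Prime) (hmod : ((9*m^2+9*m+2 : ℕ) : ZMod p) = 0) (hmp : 2*m < p) :
    ((∑ k ∈ range (m+1), k * (3*k).factorial * 54^(m-k) * (m.choose k * (m-k).factorial)^3 : ℕ) : ZMod p)
      = 27^m * ((m.factorial : ℕ) : ZMod p)^3
        * (((∑ j ∈ range (m+1), (-1:ℤ)^j * ((m.choose j):ℤ)^2 * (2*(j:ℤ) - (m:ℤ)) : ℤ)) : ZMod p) := by
  rw [Nat.cast_sum, ← VtoV m, Int.cast_sum, Finset.mul_sum]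
  refine Finset.sum_congr rfl (fun k hk => ?_)
  have hk' : k ≤ m := Nat.lt_succ_iff.mp (mem_range.mp hk)
  rw [termCong p m k hp hmod hmp hk']
  push_cast
  ring

lemma hpDlem (p m : ℕ) (hp : p.Prime) (hp5 : 5 < p) (hm : m < p) :
    ¬ p ∣ 54^m * m.factorial^3 := by
  intro h
  rcases (Nat.Prime.dvd_mul hp).mp h with h | h
  · have h54 : p ∣ 54 := hp.dvd_of_dvd_pow h
    have : p ∣ 2 * 27 := by norm_num at h54 ⊢; exact h54
    rcases (Nat.Prime.dvd_mul hp).mp this with h2 | h27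
    · have := Nat.le_of_dvd (by norm_num) h2; omega
    · have h3 : p ∣ 3 := hp.dvd_of_dvd_pow (show p ∣ 3^3 by norm_num at h27 ⊢; exact h27)
      have := Nat.le_of_dvd (by norm_num) h3; omega
  · have := hp.dvd_of_dvd_pow h
    rw [Nat.Prime.dvd_factorial hp] at this
    omega

theorem stmt12 (p : ℕ) (hp : p.Prime) (hp5 : 5 < p) :
    (p % 6 = 1 →
      ratCongr p 1
        (∑ k ∈ Finset.range (p / 3 + 1),
          (k : ℚ) * ((3 * k).factorial : ℚ) / (54 ^ k * (k.factorial : ℚ) ^ 3)) 0) ∧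
    (p % 6 = 5 →
      ratCongr p 1
        (∑ k ∈ Finset.range (p / 3 + 1),
          (k : ℚ) * ((3 * k).factorial : ℚ) / (54 ^ k * (k.factorial : ℚ) ^ 3))
        ((3 : ℚ)⁻¹ * (-1 : ℚ) ^ ((p + 1) / 6) * ((2 : ℚ) ^ ((p + 1) / 3))⁻¹ *
          (((p + 1) / 3).choose ((p + 1) / 6) : ℚ))) := by
  haveI : Fact p.Prime := ⟨hp⟩
  constructor
  · -- case p ≡ 1 mod 6
    intro h1
    have hpu : p = 6*(p/6) + 1 := by omega
    set u := p / 6 with hu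
    have hm3 : p / 3 = 2*u := by omega
    rw [hm3]
    have hmod : ((9*(2*u)^2+9*(2*u)+2 : ℕ) : ZMod p) = 0 := by
      have he : (9*(2*u)^2+9*(2*u)+2 : ℕ) = p*(3*(2*u)+2) := by rw [hpu]; ring
      rw [he]
      push_cast [ZMod.natCast_self]
      ring
    have hmp : 2*(2*u) < p := by omega
    have hA0 : ((∑ k ∈ range (2*u+1), k * (3*k).factorial * 54^(2*u-k) * ((2*u).choose k * (2*u-k).factorial)^3 : ℕ) : ZMod p) = 0 := by
      rw [Acast p (2*u) hp hmod hmp]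
      have := Veven (2*u) ⟨u, by omega⟩
      rw [this]
      simp
    have hdvd : p ∣ ∑ k ∈ range (2*u+1), k * (3*k).factorial * 54^(2*u-k) * ((2*u).choose k * (2*u-k).factorial)^3 :=
      (ZMod.natCast_eq_zero_iff _ _).mp hA0
    apply ratCongr_of p _ 0
      ((∑ k ∈ range (2*u+1), k * (3*k).factorial * 54^(2*u-k) * ((2*u).choose k * (2*u-k).factorial)^3 : ℕ) : ℤ)
      (54^(2*u) * (2*u).factorial^3)
    · rw [sub_zero, sumEq (2*u)]; push_cast; ring
    · exact_mod_cast hdvd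
    · exact hpDlem p (2*u) hp hp5 (by omega)
  · -- case p ≡ 5 mod 6
    intro h5
    have hpu : p = 6*(p/6) + 5 := by omega
    set u := p / 6 with hu
    have hm3 : p / 3 = 2*u+1 := by omega
    have hs6 : (p+1)/6 = u+1 := by omega
    have hs3 : (p+1)/3 = 2*u+2 := by omega
    rw [hm3, hs6, hs3]
    have hmod : ((9*(2*u+1)^2+9*(2*u+1)+2 : ℕ) : ZMod p) = 0 := by
      have he : (9*(2*u+1)^2+9*(2*u+1)+2 : ℕ) = (3*(2*u+1)+1)*p := by rw [hpu]; ring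
      rw [he]
      push_cast [ZMod.natCast_self]
      ring
    have hmp : 2*(2*u+1) < p := by omega
    set A := ∑ k ∈ range (2*u+1+1), k * (3*k).factorial * 54^(2*u+1-k) * ((2*u+1).choose k * (2*u+1-k).factorial)^3 with hAdef
    set N : ℤ := 3 * 2^(2*u+2) * (A : ℤ)
      - (-1)^(u+1) * (((2*u+2).choose (u+1)) : ℤ) * ((54^(2*u+1) * (2*u+1).factorial^3 : ℕ) : ℤ) with hNdef
    have hcb : (u+1) * ((2*u+2).choose (u+1)) = 2*(2*u+1)*((2*u).choose u) := by
      have h := Nat.succ_mul_centralBinom_succ u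
      rw [Nat.centralBinom_eq_two_mul_choose, Nat.centralBinom_eq_two_mul_choose] at h
      rw [show 2*(u+1) = 2*u+2 by ring] at h
      omega
    have hNzero : (N : ZMod p) = 0 := by
      have hAc := Acast p (2*u+1) hp hmod hmp
      rw [← hAdef] at hAc
      have hV : (∑ j ∈ range (2*u+1+1), (-1:ℤ)^j * (((2*u+1).choose j):ℤ)^2 * (2*(j:ℤ) - ((2*u+1:ℕ):ℤ)))
          = -2*((2*u:ℤ)+1) * ((-1)^u * ((2*u).choose u)) := by
        have h := Vodd u
        convert h using 2
        push_cast; ring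
      rw [hV] at hAc
      have hu1 : ((u+1 : ℕ) : ZMod p) ≠ 0 := by
        rw [Ne, ZMod.natCast_eq_zero_iff]
        intro h
        have := Nat.le_of_dvd (by omega) h
        omega
      have hcb' : ((u:ZMod p)+1) * (((2*u+2).choose (u+1) : ℕ) : ZMod p)
          = 2*(2*(u:ZMod p)+1) * (((2*u).choose u : ℕ) : ZMod p) := by
        have := congrArg (fun n : ℕ => (n : ZMod p)) hcb
        push_cast at this
        convert this using 2 <;> push_cast <;> ring
      have h6p : (6*(u:ZMod p)+5) = 0 := by
        have h0 : ((6*u+5 : ℕ) : ZMod p) = 0 := by rw [← hpu]; exact ZMod.natCast_self p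
        push_cast at h0
        exact h0
      have key : (N : ZMod p) * ((u:ZMod p)+1) = 0 := by
        push_cast [hNdef]
        rw [hAc]
        push_cast
        have h54 : (54:ZMod p)^(2*u+1) = 2^(2*u+1) * 27^(2*u+1) := by
          rw [← mul_pow]; norm_num
        rw [h54]
        linear_combination ((-1:ZMod p)^u * 2^(2*u+1) * 27^(2*u+1) * (((2*u+1).factorial : ℕ) : ZMod p)^3) * hcb'
          + (-2*(2*(u:ZMod p)+1) * ((-1:ZMod p)^u) * (((2*u).choose u : ℕ) : ZMod p) * 2^(2*u+1) * 27^(2*u+1) * (((2*u+1).factorial : ℕ) : ZMod p)^3) * h6p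
      have := mul_eq_zero.mp key
      rcases this with h | h
      · exact h
      · exfalso
        apply hu1
        push_cast
        linear_combination h
    have hpN : (p:ℤ) ∣ N := by
      rwa [← ZMod.intCast_zmod_eq_zero_iff_dvd]
    apply ratCongr_of p _ _ N (3 * 2^(2*u+2) * (54^(2*u+1) * (2*u+1).factorial^3))
    · rw [sumEq (2*u+1), hNdef, hAdef]
      have hD : ((54^(2*u+1) * (2*u+1).factorial^3 : ℕ) : ℚ) ≠ 0 := by positivity
      push_cast
      field_simp
    · exact hpN
    · intro h
      rcases (Nat.Prime.dvd_mul hp).mp h with h | h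
      · rcases (Nat.Prime.dvd_mul hp).mp h with h | h
        · have := Nat.le_of_dvd (by norm_num) h; omega
        · have h2 : p ∣ 2 := hp.dvd_of_dvd_pow h
          have := Nat.le_of_dvd (by norm_num) h2; omega
      · exact hpDlem p (2*u+1) hp hp5 (by omega) h
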